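/- Let n be a positive integer and let F be a family of subsets of {1,...,n} with the property that for every two distinct A, B in F there exists k in {0,...,n} such that (A ∩ {1,...,k} ⊆ B ∩ {1,...,k} or B ∩ {1,...,k} ⊆ A ∩ {1,...,k}) and (A ∩ {k+1,...,n} ⊆ B ∩ {k+1,...,n} or B ∩ {k+1,...,n} ⊆ A ∩ {k+1,...,n}). Then |F| ≤ n^3 + 1 (in particular |F| is at most polynomial in n). -/

import Mathlib

open Finset in
private lemma bichain_gauss (n : ℕ) : (∑ i ∈ Icc 1 n, i) * 2 = n * (n + 1) := by
  have h := Finset.sum_range_id_mul_two (n+1)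
  have he : (∑ i ∈ Icc 1 n, i) = ∑ i ∈ range (n+1), i := by
    rw [Finset.sum_range_succ']
    simp only [Nat.succ_sub_one, Nat.sub_zero, add_zero]
    rw [Finset.range_eq_Ico, ← Finset.Ico_add_one_right_eq_Icc]
    rw [Finset.sum_Ico_eq_sum_range]
    simp [add_comm]
  rw [he, h, Nat.add_sub_cancel, mul_comm]

private lemma bichain_sum_lt (n : ℕ) (A B : Finset ℕ) (k : ℕ)
    (hA : A ⊆ Finset.Icc 1 n) (hB : B ⊆ Finset.Icc 1 n)
    (hcard : A.card = B.card) (hne : A ≠ B)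
    (h1 : A ∩ Finset.Icc 1 k ⊆ B ∩ Finset.Icc 1 k)
    (h2 : B ∩ Finset.Icc (k+1) n ⊆ A ∩ Finset.Icc (k+1) n) :
    B.sum id < A.sum id := by
  have hAB : ∀ x ∈ A \ B, k + 1 ≤ x := by
    intro x hx
    rw [Finset.mem_sdiff] at hx
    by_contra h
    push_neg at h
    have hx1 : x ∈ A ∩ Finset.Icc 1 k := by
      rw [Finset.mem_inter, Finset.mem_Icc]
      exact ⟨hx.1, (Finset.mem_Icc.mp (hA hx.1)).1, Nat.lt_succ_iff.mp h⟩
    exact hx.2 (Finset.mem_inter.mp (h1 hx1)).1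
  have hBA : ∀ x ∈ B \ A, x ≤ k := by
    intro x hx
    rw [Finset.mem_sdiff] at hx
    by_contra h
    push_neg at h
    have hx1 : x ∈ B ∩ Finset.Icc (k+1) n := by
      rw [Finset.mem_inter, Finset.mem_Icc]
      exact ⟨hx.1, h, (Finset.mem_Icc.mp (hB hx.1)).2⟩
    exact hx.2 (Finset.mem_inter.mp (h2 hx1)).1
  have hdc : (A \ B).card = (B \ A).card := Finset.card_sdiff_comm hcard
  have hdne : (A \ B).Nonempty := by
    rw [Finset.sdiff_nonempty]
    intro h
    exact hne (Finset.eq_of_subset_of_card_le h (le_of_eq hcard.symm))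
  have hd : 0 < (A \ B).card := Finset.card_pos.mpr hdne
  have hs1 : (B \ A).sum id ≤ (B \ A).card * k := by
    simpa using Finset.sum_le_card_nsmul _ _ _ hBA
  have hs2 : (A \ B).card * (k+1) ≤ (A \ B).sum id := by
    simpa using Finset.card_nsmul_le_sum _ _ _ hAB
  have key : (B \ A).sum id < (A \ B).sum id := by
    calc (B \ A).sum id ≤ (B \ A).card * k := hs1
    _ = (A \ B).card * k := by rw [hdc]
    _ < (A \ B).card * (k+1) := mul_lt_mul_of_pos_left (Nat.lt_succ_self k) hd
    _ ≤ (A \ B).sum id := hs2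
  have eA : A.sum id = (A ∩ B).sum id + (A \ B).sum id :=
    (Finset.sum_inter_add_sum_sdiff A B id).symm
  have eB : B.sum id = (B ∩ A).sum id + (B \ A).sum id :=
    (Finset.sum_inter_add_sum_sdiff B A id).symm
  rw [eA, eB, Finset.inter_comm B A]
  omega

/-- Sauer–Shelah-type bound for bi-chains: a bi-chain family of subsets of
`{1,...,n}` has at most `n^3 + 1` members. -/
theorem bichain_card_le (n : ℕ) (hn : 1 ≤ n) (F : Finset (Finset ℕ))
    (hsub : ∀ A ∈ F, A ⊆ Finset.Icc 1 n)
    (hbi : ∀ A ∈ F, ∀ B ∈ F, A ≠ B → ∃ k ≤ n,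
      (A ∩ Finset.Icc 1 k ⊆ B ∩ Finset.Icc 1 k ∨
        B ∩ Finset.Icc 1 k ⊆ A ∩ Finset.Icc 1 k) ∧
      (A ∩ Finset.Icc (k+1) n ⊆ B ∩ Finset.Icc (k+1) n ∨
        B ∩ Finset.Icc (k+1) n ⊆ A ∩ Finset.Icc (k+1) n)) :
    F.card ≤ n ^ 3 + 1 := by
  by_cases hsmall : n ≤ 2
  · have h1 : F ⊆ (Finset.Icc 1 n).powerset := by
      intro A hA
      exact Finset.mem_powerset.mpr (hsub A hA)
    have h2 : F.card ≤ 2 ^ n := by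
      calc F.card ≤ (Finset.Icc 1 n).powerset.card := Finset.card_le_card h1
      _ = 2 ^ (Finset.Icc 1 n).card := Finset.card_powerset _
      _ = 2 ^ n := by rw [Nat.card_Icc]; norm_num
    interval_cases n <;> omega
  · push_neg at hsmall
    set S := (Finset.Icc 1 n).sum id with hS
    have hSS : S * 2 = n * (n + 1) := by
      rw [hS]; simpa using bichain_gauss n
    have hinj : F.card ≤ ((Finset.Iic n) ×ˢ (Finset.Iic S)).card := by
      apply Finset.card_le_card_of_injOn (fun A => (A.card, A.sum id))
      · intro A hA
        rw [Finset.mem_coe, Finset.mem_product, Finset.mem_Iic, Finset.mem_Iic]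
        constructor
        · calc A.card ≤ (Finset.Icc 1 n).card := Finset.card_le_card (hsub A hA)
          _ = n := by rw [Nat.card_Icc]; omega
        · exact Finset.sum_le_sum_of_subset (hsub A hA)
      · intro A hA B hB heq
        by_contra hne
        simp only [Prod.mk.injEq] at heq
        obtain ⟨hc, hs⟩ := heq
        obtain ⟨k, hk, hpre, hsuf⟩ := hbi A hA B hB hne
        have hsplit : ∀ X Y : Finset ℕ, X ⊆ Finset.Icc 1 n →
            X ∩ Finset.Icc 1 k ⊆ Y ∩ Finset.Icc 1 k →
            X ∩ Finset.Icc (k+1) n ⊆ Y ∩ Finset.Icc (k+1) n → X ⊆ Y := by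
          intro X Y hX hp hq x hx
          have hxm := Finset.mem_Icc.mp (hX hx)
          by_cases hxk : x ≤ k
          · exact (Finset.mem_inter.mp (hp (Finset.mem_inter.mpr
              ⟨hx, Finset.mem_Icc.mpr ⟨hxm.1, hxk⟩⟩))).1
          · exact (Finset.mem_inter.mp (hq (Finset.mem_inter.mpr
              ⟨hx, Finset.mem_Icc.mpr ⟨by omega, hxm.2⟩⟩))).1
        rcases hpre with hp | hp <;> rcases hsuf with hq | hq
        · exact hne (Finset.eq_of_subset_of_card_le
            (hsplit A B (hsub A hA) hp hq) (le_of_eq hc.symm))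
        · exact absurd hs.symm (Nat.ne_of_lt
            (bichain_sum_lt n A B k (hsub A hA) (hsub B hB) hc hne hp hq))
        · exact absurd hs (Nat.ne_of_lt
            (bichain_sum_lt n B A k (hsub B hB) (hsub A hA) hc.symm (Ne.symm hne) hp hq))
        · exact hne ((Finset.eq_of_subset_of_card_le
            (hsplit B A (hsub B hB) hp hq) (le_of_eq hc)).symm)
    have hcardprod : ((Finset.Iic n) ×ˢ (Finset.Iic S)).card = (n+1) * (S+1) := by
      rw [Finset.card_product, Nat.card_Iic, Nat.card_Iic]
    rw [hcardprod] at hinj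
    have hfin : (n+1) * (S+1) ≤ n ^ 3 + 1 := by nlinarith [hSS, hsmall]
    omega
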